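/- Let G be the free group on two generators x and y, and let H be the subgroup generated by the elements x⁻ⁿyxⁿ for all positive integers n. Then x ∈ S(H) (i.e., xHx⁻¹ ∩ H has finite index in H, in fact xHx⁻¹ ⊇ H), but x does not normalize H* = H; in particular y ∈ xHx⁻¹ but y ∉ H. -/

import Mathlib

namespace Stmt5Aux
open FreeGroup List

/-- weight of a letter: x-exponent contribution. -/
def wt (p : Bool × Bool) : ℤ := if p.1 then (if p.2 then 1 else -1) else 0

def sig (L : List (Bool × Bool)) : ℤ := (L.map wt).sum

/-- every y-letter occurs at height ≤ -1, starting from height h -/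
def Cond : List (Bool × Bool) → ℤ → Prop
  | [], _ => True
  | p :: L, h => (p.1 = false → h ≤ -1) ∧ Cond L (h + wt p)

@[simp] lemma cond_nil (h : ℤ) : Cond [] h := trivial

@[simp] lemma cond_cons (p : Bool × Bool) (L : List (Bool × Bool)) (h : ℤ) :
    Cond (p :: L) h ↔ (p.1 = false → h ≤ -1) ∧ Cond L (h + wt p) := Iff.rfl

@[simp] lemma sig_nil : sig ([] : List (Bool × Bool)) = 0 := rfl

@[simp] lemma sig_cons (p : Bool × Bool) (L : List (Bool × Bool)) :
    sig (p :: L) = wt p + sig L := by simp [sig]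

@[simp] lemma sig_append (A B : List (Bool × Bool)) : sig (A ++ B) = sig A + sig B := by
  simp [sig]

lemma wt_flip (p : Bool × Bool) : wt (p.1, !p.2) = -wt p := by
  rcases p with ⟨a, b⟩; cases a <;> cases b <;> simp [wt]

@[simp] lemma sig_invRev (L : List (Bool × Bool)) : sig (invRev L) = -sig L := by
  induction L with
  | nil => simp [invRev]
  | cons p L ih =>
    have : invRev (p :: L) = invRev L ++ [(p.1, !p.2)] := by simp [invRev]
    rw [this]; simp [ih, wt_flip]

lemma invRev_cons (p : Bool × Bool) (L : List (Bool × Bool)) :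
    invRev (p :: L) = invRev L ++ [(p.1, !p.2)] := by simp [invRev]

lemma cond_append (A B : List (Bool × Bool)) (h : ℤ) :
    Cond (A ++ B) h ↔ Cond A h ∧ Cond B (h + sig A) := by
  induction A generalizing h with
  | nil => simp
  | cons p A ih =>
    simp only [cons_append, cond_cons, ih, sig_cons]
    constructor
    · rintro ⟨h1, h2, h3⟩
      exact ⟨⟨h1, h2⟩, by rw [show h + (wt p + sig A) = h + wt p + sig A by ring]; exact h3⟩
    · rintro ⟨⟨h1, h2⟩, h3⟩
      exact ⟨h1, h2, by rw [show h + wt p + sig A = h + (wt p + sig A) by ring]; exact h3⟩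

lemma cond_congr {L : List (Bool × Bool)} {h₁ h₂ : ℤ} (e : h₁ = h₂) (hc : Cond L h₁) :
    Cond L h₂ := e ▸ hc

lemma cond_invRev (L : List (Bool × Bool)) (h : ℤ) (hc : Cond L h) :
    Cond (invRev L) (h + sig L) := by
  induction L generalizing h with
  | nil => simp
  | cons p L ih =>
    obtain ⟨h1, h2⟩ := hc
    rw [invRev_cons, cond_append]
    refine ⟨cond_congr ?_ (ih (h + wt p) h2), ?_⟩
    · simp; ring
    · simp only [cond_cons, cond_nil, and_true]
      intro hp
      have := h1 hp
      have hw : wt p = 0 := by rcases p with ⟨a,b⟩; simp at hp; subst hp; simp [wt]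
      simp only [hw, sig_invRev, sig_cons]
      omega

lemma step_sig {L₁ L₂ : List (Bool × Bool)} (s : Red.Step L₁ L₂) : sig L₁ = sig L₂ := by
  cases s with
  | @not A B x b =>
    simp [wt_flip (p := (x, b))]

lemma step_cond {L₁ L₂ : List (Bool × Bool)} (s : Red.Step L₁ L₂) (h : ℤ)
    (hc : Cond L₁ h) : Cond L₂ h := by
  cases s with
  | @not A B x b =>
    rw [cond_append] at hc ⊢
    obtain ⟨h1, h2⟩ := hc
    refine ⟨h1, ?_⟩
    obtain ⟨_, _, h5⟩ := h2
    refine cond_congr ?_ h5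
    have := wt_flip (p := (x, b))
    simp at this ⊢
    omega

lemma red_sig {L₁ L₂ : List (Bool × Bool)} (r : Red L₁ L₂) : sig L₁ = sig L₂ := by
  induction r with
  | refl => rfl
  | tail _ s ih => exact ih.trans (step_sig s)

lemma red_cond {L₁ L₂ : List (Bool × Bool)} (r : Red L₁ L₂) (h : ℤ)
    (hc : Cond L₁ h) : Cond L₂ h := by
  induction r with
  | refl => exact hc
  | tail _ s ih => exact step_cond s h ih

/-- The subgroup of words with x-exponent sum 0 and every y-letter at height ≤ -1. -/
def Csub : Subgroup (FreeGroup Bool) where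
  carrier := {g | sig g.toWord = 0 ∧ Cond g.toWord 0}
  one_mem' := by simp [toWord_one]
  mul_mem' := by
    rintro a b ⟨ha1, ha2⟩ ⟨hb1, hb2⟩
    have e : a * b = mk (a.toWord ++ b.toWord) := by
      conv_lhs => rw [← mk_toWord (x := a), ← mk_toWord (x := b)]
      rw [mul_mk]
    have hred : Red (a.toWord ++ b.toWord) ((a*b).toWord) := by
      rw [e, toWord_mk]; exact reduce.red
    constructor
    · rw [← red_sig hred]; simp [ha1, hb1]
    · refine red_cond hred 0 ?_
      rw [cond_append]
      exact ⟨ha2, by rw [ha1, add_zero]; exact hb2⟩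
  inv_mem' := by
    rintro a ⟨ha1, ha2⟩
    have e : a⁻¹ = mk (invRev a.toWord) := by
      conv_lhs => rw [← mk_toWord (x := a)]; rw [inv_mk]
    have hred : Red (invRev a.toWord) (a⁻¹.toWord) := by
      rw [e, toWord_mk]; exact reduce.red
    constructor
    · rw [← red_sig hred]; simp [ha1]
    · refine red_cond hred 0 ?_
      have := cond_invRev a.toWord 0 ha2
      rwa [zero_add, ha1] at this

lemma mk_mem_Csub {L : List (Bool × Bool)} (h1 : sig L = 0) (h2 : Cond L 0) :
    mk L ∈ Csub := by
  have hred : Red L ((mk L).toWord) := by rw [toWord_mk]; exact reduce.red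
  exact ⟨by rw [← red_sig hred]; exact h1, red_cond hred 0 h2⟩


/-! ### Reduced words and cyclic decomposition -/

def Rel (a b : Bool × Bool) : Prop := ¬(a.1 = b.1 ∧ a.2 = !b.2)

def Reduced (L : List (Bool × Bool)) : Prop := List.Chain' Rel L

lemma reduce_eq_self {L : List (Bool × Bool)} (h : Reduced L) : reduce L = L := by
  induction L with
  | nil => rfl
  | cons p L ih =>
    have hL : Reduced L := h.tail
    rw [reduce.cons, ih hL]
    cases L with
    | nil => rfl
    | cons q M =>
      have hrel : Rel p q := (List.isChain_cons_cons.1 h).1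
      simp only [Rel] at hrel
      simp [if_neg hrel]

lemma reduced_reduce (L : List (Bool × Bool)) : Reduced (reduce L) := by
  induction L with
  | nil => exact List.isChain_nil
  | cons p L ih =>
    rw [reduce.cons]
    cases h : reduce L with
    | nil => exact List.isChain_singleton _
    | cons q M =>
      rw [h] at ih
      by_cases hc : p.1 = q.1 ∧ p.2 = !q.2
      · simp only [if_pos hc]
        exact ih.tail
      · simp only [if_neg hc]
        exact List.isChain_cons_cons.2 ⟨hc, ih⟩

lemma reduced_toWord (g : FreeGroup Bool) : Reduced g.toWord := by
  rw [← reduce_toWord]; exact reduced_reduce _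

lemma cycdec : ∀ (n : ℕ) (L : List (Bool × Bool)), L.length ≤ n → Reduced L → L ≠ [] →
    ∃ u c, L = u ++ c ++ invRev u ∧ c ≠ [] ∧
      ∀ a ∈ c.getLast?, ∀ b ∈ c.head?, Rel a b := by
  intro n
  induction n with
  | zero =>
    intro L hlen _ hne
    exact absurd (List.eq_nil_of_length_eq_zero (Nat.le_zero.1 hlen)) hne
  | succ n ih =>
    intro L hlen hred hne
    obtain ⟨p, M, rfl⟩ := List.exists_cons_of_ne_nil hne
    rcases List.eq_nil_or_concat M with rfl | ⟨M', q, rfl⟩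
    · refine ⟨[], [p], by simp [invRev], by simp, ?_⟩
      intro a ha b hb
      simp at ha hb
      subst ha; subst hb
      simp [Rel]
    · by_cases hw : q.1 = p.1 ∧ q.2 = !p.2
      · -- cancelling ends: strip
        have hM' : M' ≠ [] := by
          rintro rfl
          have : Rel p q := List.isChain_pair.1 (by exact hred)
          rcases p with ⟨a, b⟩
          rcases q with ⟨a', b'⟩
          simp_all [Rel]
        have hredM' : Reduced M' := by
          have h1 : Reduced (M' ++ [q]) := by have := hred.tail; simp only [List.tail_cons, List.concat_eq_append] at this; exact this
          exact (List.isChain_append.1 h1).1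
        have hlen' : M'.length ≤ n := by
          simp at hlen
          omega
        obtain ⟨u', c, hdec, hc, hwrap⟩ := ih M' hlen' hredM' hM'
        refine ⟨p :: u', c, ?_, hc, hwrap⟩
        have hq : q = (p.1, !p.2) := by
          rcases q with ⟨a', b'⟩; rcases p with ⟨a, b⟩; simp_all
        rw [invRev_cons, hdec, hq]
        simp
      · refine ⟨[], p :: (M' ++ [q]), by simp [invRev], by simp, ?_⟩
        intro a ha b hb
        have hb' : p = b := by simpa using hb
        have ha' : q = a := by
          rw [show p :: (M' ++ [q]) = (p :: M') ++ [q] by simp, List.getLast?_concat] at ha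
          simpa using ha
        subst ha'; subst hb'
        exact hw


lemma sig_flatten_replicate (i : ℕ) (c : List (Bool × Bool)) :
    sig ((List.replicate i c).flatten) = (i : ℤ) * sig c := by
  induction i with
  | zero => simp
  | succ j ih =>
    rw [List.replicate_succ, List.flatten_cons, sig_append, ih]
    push_cast
    ring

lemma chain_cpow_append (c B : List (Bool × Bool)) (hc : c ≠ [])
    (hcc : List.Chain' Rel c) (hB : List.Chain' Rel B)
    (hjunc : ∀ a ∈ c.getLast?, ∀ b ∈ B.head?, Rel a b)
    (hwrap : ∀ a ∈ c.getLast?, ∀ b ∈ c.head?, Rel a b) :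
    ∀ i, 1 ≤ i → List.Chain' Rel ((List.replicate i c).flatten ++ B) ∧
      ((List.replicate i c).flatten ++ B).head? = c.head? := by
  intro i
  induction i with
  | zero => omega
  | succ j ih =>
    intro _
    rcases Nat.eq_zero_or_pos j with rfl | hj
    · simp only [List.replicate_succ, List.flatten_cons, List.replicate_zero,
        List.flatten_nil, List.append_nil]
      exact ⟨List.isChain_append.2 ⟨hcc, hB, hjunc⟩, List.head?_append_of_ne_nil _ hc⟩
    · obtain ⟨ih1, ih2⟩ := ih hj
      rw [List.replicate_succ, List.flatten_cons, List.append_assoc]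
      constructor
      · refine List.isChain_append.2 ⟨hcc, ih1, ?_⟩
        intro a ha b hb
        rw [ih2] at hb
        exact hwrap a ha b hb
      · rw [List.head?_append_of_ne_nil _ hc]

lemma csub_root (g : FreeGroup Bool) (i : ℕ) (hi : 0 < i) (h : g ^ i ∈ Csub) :
    g ∈ Csub := by
  by_cases hg : g = 1
  · subst hg; exact Csub.one_mem
  have hne : g.toWord ≠ [] := fun e => hg (toWord_eq_nil_iff.1 e)
  obtain ⟨u, c, hdec, hc, hwrap⟩ :=
    cycdec g.toWord.length g.toWord le_rfl (reduced_toWord g) hne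
  have hdec' : g.toWord = u ++ (c ++ invRev u) := by rw [hdec, List.append_assoc]
  have hred : List.Chain' Rel (u ++ (c ++ invRev u)) := by
    have := reduced_toWord g
    rw [hdec'] at this
    exact this
  obtain ⟨hu, hcb, hju⟩ := List.isChain_append.1 hred
  obtain ⟨hcc, hinv, hj2⟩ := List.isChain_append.1 hcb
  have key := chain_cpow_append c (invRev u) hc hcc hinv hj2 hwrap i hi
  have hWred : Reduced (u ++ ((List.replicate i c).flatten ++ invRev u)) := by
    refine List.isChain_append.2 ⟨hu, key.1, ?_⟩
    intro a ha b hb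
    rw [key.2] at hb
    apply hju a ha
    rw [List.head?_append_of_ne_nil _ hc]
    exact hb
  have hg' : g = mk u * mk c * (mk u)⁻¹ := by
    conv_lhs => rw [← mk_toWord (x := g)]
    rw [hdec, ← mul_mk, ← mul_mk, inv_mk]
  have hgi : g ^ i = mk (u ++ ((List.replicate i c).flatten ++ invRev u)) := by
    rw [hg', conj_pow, pow_mk, inv_mk, mul_mk, mul_mk, List.append_assoc]
  have hWword : (g ^ i).toWord = u ++ ((List.replicate i c).flatten ++ invRev u) := by
    rw [hgi, toWord_mk, reduce_eq_self hWred]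
  obtain ⟨hs, hcnd⟩ := h
  rw [hWword] at hs hcnd
  have hsc : sig c = 0 := by
    rw [sig_append, sig_append, sig_flatten_replicate, sig_invRev] at hs
    have hizero : (i : ℤ) ≠ 0 := by exact_mod_cast hi.ne'
    have : (i : ℤ) * sig c = 0 := by omega
    exact (mul_eq_zero.1 this).resolve_left hizero
  constructor
  · rw [hdec']
    simp [hsc]
  · rw [hdec']
    rw [cond_append] at hcnd ⊢
    obtain ⟨hcu, hcrest⟩ := hcnd
    refine ⟨hcu, ?_⟩
    rw [cond_append] at hcrest ⊢
    obtain ⟨hcfl, hcinv⟩ := hcrest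
    constructor
    · obtain ⟨j, rfl⟩ : ∃ j, i = j + 1 := ⟨i - 1, by omega⟩
      rw [List.replicate_succ, List.flatten_cons, cond_append] at hcfl
      exact hcfl.1
    · refine cond_congr ?_ hcinv
      rw [sig_flatten_replicate, hsc]
      ring

/-! ### The subgroup H equals Csub -/

def Sset : Set (FreeGroup Bool) :=
  {w | ∃ n : ℕ, 1 ≤ n ∧ w = ((of true) ^ n)⁻¹ * of false * (of true) ^ n}

lemma sig_replicate (n : ℕ) (b : Bool) :
    sig (List.replicate n ((true : Bool), b)) = if b then (n : ℤ) else -(n : ℤ) := by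
  cases b <;> simp [sig, List.map_replicate, List.sum_replicate, wt]

lemma cond_replicate_true (n : ℕ) (b : Bool) : ∀ h : ℤ,
    Cond (List.replicate n ((true : Bool), b)) h := by
  induction n with
  | zero => simp
  | succ m ih => intro h; rw [List.replicate_succ]; exact ⟨by simp, ih _⟩

lemma mk_replicate_true (n : ℕ) :
    mk (List.replicate n ((true : Bool), true)) = (of true) ^ n := by
  rw [← toWord_of_pow]; exact mk_toWord

lemma inv_pow_eq_mk (n : ℕ) :
    ((of true : FreeGroup Bool) ^ n)⁻¹ = mk (List.replicate n ((true : Bool), false)) := by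
  rw [← mk_replicate_true, inv_mk]
  congr 1
  simp [invRev, List.map_replicate, List.reverse_replicate]

lemma le_csub : Subgroup.closure Sset ≤ Csub := by
  rw [Subgroup.closure_le]
  rintro w ⟨n, hn, rfl⟩
  have hw : ((of true : FreeGroup Bool) ^ n)⁻¹ * of false * (of true) ^ n =
      mk (List.replicate n ((true : Bool), false) ++ [((false : Bool), true)] ++
        List.replicate n ((true : Bool), true)) := by
    rw [inv_pow_eq_mk, ← mk_replicate_true,
      show (of false : FreeGroup Bool) = mk [((false : Bool), true)] from rfl,
      mul_mk, mul_mk]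
  rw [hw]
  apply mk_mem_Csub
  · simp [sig_replicate, wt]
  · rw [cond_append, cond_append]
    refine ⟨⟨cond_replicate_true _ _ _, ?_⟩, cond_replicate_true _ _ _⟩
    refine ⟨?_, trivial⟩
    intro _
    rw [sig_replicate]
    simp only [if_neg (Bool.false_ne_true)]
    omega

lemma key_ind (L : List (Bool × Bool)) : ∀ h : ℤ, Cond L h →
    (of true : FreeGroup Bool) ^ h * mk L * ((of true) ^ (h + sig L))⁻¹ ∈
      Subgroup.closure Sset := by
  induction L with
  | nil =>
    intro h _
    rw [show mk ([] : List (Bool × Bool)) = 1 from one_eq_mk.symm]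
    simp only [sig_nil, add_zero, mul_one, mul_inv_cancel]
    exact one_mem _
  | cons p L ih =>
    intro h hc
    obtain ⟨h1, h2⟩ := hc
    have split : (of true : FreeGroup Bool) ^ h * mk (p :: L) *
        ((of true) ^ (h + sig (p :: L)))⁻¹
        = ((of true) ^ h * mk [p] * ((of true) ^ (h + wt p))⁻¹) *
          ((of true) ^ (h + wt p) * mk L * ((of true) ^ ((h + wt p) + sig L))⁻¹) := by
      rw [show mk (p :: L) = mk [p] * mk L by rw [mul_mk]; rfl, sig_cons]
      group
    rw [split]
    refine mul_mem ?_ (ih (h + wt p) h2)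
    rcases p with ⟨a, b⟩
    cases a
    · -- y-letter
      have hh : h ≤ -1 := h1 rfl
      have hgen : (of true : FreeGroup Bool) ^ h * of false * ((of true) ^ h)⁻¹ ∈
          Subgroup.closure Sset := by
        apply Subgroup.subset_closure
        refine ⟨(-h).toNat, by omega, ?_⟩
        have e : ((of true : FreeGroup Bool) ^ ((-h).toNat))⁻¹ = (of true) ^ h := by
          rw [← zpow_natCast, Int.toNat_of_nonneg (by omega : (0:ℤ) ≤ -h), ← zpow_neg]
          norm_num
        rw [e, ← e, inv_inv]
      cases b
      · have e2 : mk [((false : Bool), false)] = (of false : FreeGroup Bool)⁻¹ := by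
          rw [show (of false : FreeGroup Bool) = mk [((false : Bool), true)] from rfl, inv_mk]
          rfl
        have e3 : (of true : FreeGroup Bool) ^ h * mk [((false : Bool), false)] *
            ((of true) ^ (h + wt ((false : Bool), false)))⁻¹
            = ((of true) ^ h * of false * ((of true) ^ h)⁻¹)⁻¹ := by
          rw [e2, show wt ((false : Bool), false) = 0 from rfl, add_zero]
          group
        rw [e3]
        exact inv_mem hgen
      · have e3 : (of true : FreeGroup Bool) ^ h * mk [((false : Bool), true)] *
            ((of true) ^ (h + wt ((false : Bool), true)))⁻¹
            = (of true) ^ h * of false * ((of true) ^ h)⁻¹ := by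
          rw [show mk [((false : Bool), true)] = (of false : FreeGroup Bool) from rfl,
            show wt ((false : Bool), true) = 0 from rfl, add_zero]
        rw [e3]
        exact hgen
    · -- x-letter
      have e : mk [((true : Bool), b)] = (of true : FreeGroup Bool) ^ (wt ((true : Bool), b)) := by
        cases b
        · rw [show wt ((true : Bool), false) = -1 from rfl, zpow_neg, zpow_one,
            show (of true : FreeGroup Bool) = mk [((true : Bool), true)] from rfl, inv_mk]
          rfl
        · rw [show wt ((true : Bool), true) = 1 from rfl, zpow_one]
          rfl
      rw [e, ← zpow_add, mul_inv_cancel]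
      exact one_mem _

lemma csub_le : Csub ≤ Subgroup.closure Sset := by
  rintro g ⟨hs, hcnd⟩
  have hk := key_ind g.toWord 0 hcnd
  rw [hs] at hk
  simpa [mk_toWord] using hk

lemma closure_eq : Subgroup.closure Sset = Csub := le_antisymm le_csub csub_le

lemma y_not_mem_csub : of false ∉ Csub := by
  rintro ⟨_, hcnd⟩
  rw [toWord_of] at hcnd
  have := hcnd.1 rfl
  omega

end Stmt5Aux



/-- The root closure `H*` of a subgroup `H` of `G`: the smallest subgroup of `G`
containing `H` such that whenever `x ^ i` lies in it for some positive integer `i`,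
so does `x`. -/
def rootClosure {G : Type*} [Group G] (H : Subgroup G) : Subgroup G :=
  sInf {N : Subgroup G | H ≤ N ∧ ∀ (x : G) (i : ℕ), 0 < i → x ^ i ∈ N → x ∈ N}

/-- Let `G` be the free group on two generators `x`, `y` and `H`
the subgroup generated by the elements `x⁻ⁿ y xⁿ`, `n ≥ 1`. Then `x ∈ S(H)` (in
fact `H ⊆ x H x⁻¹`, so `x H x⁻¹ ∩ H = H` has finite index in `H`), but `x` does
not normalize `H* = H`; in particular `y ∈ x H x⁻¹` but `y ∉ H`. -/
theorem stmt5 :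
    ∀ x y : FreeGroup Bool, x = FreeGroup.of true → y = FreeGroup.of false →
    ∀ H : Subgroup (FreeGroup Bool),
      H = Subgroup.closure {w | ∃ n : ℕ, 1 ≤ n ∧ w = (x ^ n)⁻¹ * y * x ^ n} →
      H ≤ H.map (MulAut.conj x).toMonoidHom ∧
      (H.map (MulAut.conj x).toMonoidHom).relIndex H ≠ 0 ∧
      rootClosure H = H ∧
      x ∉ Subgroup.normalizer (rootClosure H : Set (FreeGroup Bool)) ∧
      y ∈ H.map (MulAut.conj x).toMonoidHom ∧
      y ∉ H := by
  intro x y hx hy H hH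
  subst hx; subst hy
  have hHs : H = Subgroup.closure Stmt5Aux.Sset := hH
  have hHc : H = Stmt5Aux.Csub := by rw [hHs, Stmt5Aux.closure_eq]
  set f := (MulAut.conj (FreeGroup.of true)).toMonoidHom with hf
  have hfapp : ∀ g : FreeGroup Bool,
      f g = FreeGroup.of true * g * (FreeGroup.of true)⁻¹ := by
    intro g; simp [hf, MulAut.conj]
  -- y ∉ H
  have hyH : FreeGroup.of false ∉ H := by
    rw [hHc]; exact Stmt5Aux.y_not_mem_csub
  -- a₁ ∈ H
  have ha1 : (FreeGroup.of true)⁻¹ * FreeGroup.of false * FreeGroup.of true ∈ H := by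
    rw [hH]
    apply Subgroup.subset_closure
    exact ⟨1, le_rfl, by rw [pow_one]⟩
  -- part 1
  have part1 : H ≤ H.map f := by
    rw [hH]
    rw [MonoidHom.map_closure]
    apply Subgroup.closure_mono
    rintro w ⟨n, hn, rfl⟩
    refine ⟨((FreeGroup.of true) ^ (n + 1))⁻¹ * FreeGroup.of false *
      (FreeGroup.of true) ^ (n + 1), ⟨n + 1, by omega, rfl⟩, ?_⟩
    rw [hfapp, pow_succ]
    group
  -- part 2
  have part2 : (H.map f).relIndex H ≠ 0 := by
    have htop : (H.map f).subgroupOf H = ⊤ := Subgroup.subgroupOf_eq_top.2 part1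
    unfold Subgroup.relIndex
    rw [htop, Subgroup.index_top]
    exact one_ne_zero
  -- part 3
  have part3 : rootClosure H = H := by
    refine le_antisymm (sInf_le ⟨le_rfl, ?_⟩) (le_sInf fun N hN => hN.1)
    intro g i hi hg
    rw [hHc] at hg ⊢
    exact Stmt5Aux.csub_root g i hi hg
  -- part 5
  have part5 : FreeGroup.of false ∈ H.map f := by
    refine Subgroup.mem_map.2 ⟨_, ha1, ?_⟩
    rw [hfapp]
    group
  -- part 4
  have part4 : FreeGroup.of true ∉ Subgroup.normalizer (rootClosure H : Set (FreeGroup Bool)) := by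
    rw [part3]
    intro hmem
    have h2 := (Subgroup.mem_normalizer_iff.1 hmem _).1 ha1
    have e : FreeGroup.of true *
        ((FreeGroup.of true)⁻¹ * FreeGroup.of false * FreeGroup.of true) *
        (FreeGroup.of true)⁻¹ = FreeGroup.of false := by group
    rw [e] at h2
    exact hyH h2
  exact ⟨part1, part2, part3, part4, part5, hyH⟩
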